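/- Let k be an uncountable algebraically closed field and S = k[z_1, z_2, ...] the polynomial ring in countably many variables. An ideal M of S is maximal if and only if M is generated by {z_i − a_i : i ∈ ℕ} for some point (a_i) ∈ k^ℕ. -/

import Mathlib

open MvPolynomial

lemma aux_mk_eq_C {k : Type*} [CommRing k] (a : ℕ → k) (p : MvPolynomial ℕ k) :
    Ideal.Quotient.mk (Ideal.span (Set.range fun i : ℕ => X i - C (a i))) p =
    Ideal.Quotient.mk (Ideal.span (Set.range fun i : ℕ => X i - C (a i))) (C (eval a p)) := by
  induction p using MvPolynomial.induction_on with
  | C c => simp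
  | add p q hp hq =>
    rw [eval_add, C_add, (Ideal.Quotient.mk _).map_add, (Ideal.Quotient.mk _).map_add, hp, hq]
  | mul_X p i hp =>
    have hX : Ideal.Quotient.mk (Ideal.span (Set.range fun i : ℕ => X i - C (a i))) (X i)
        = Ideal.Quotient.mk (Ideal.span (Set.range fun i : ℕ => X i - C (a i))) (C (a i)) :=
      Ideal.Quotient.eq.2 (Ideal.subset_span ⟨i, rfl⟩)
    rw [map_mul, hp, hX, ← map_mul, ← C_mul, eval_mul, eval_X]

lemma aux_span_eq_vanishingIdeal {k : Type*} [Field k] (a : ℕ → k) :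
    Ideal.span (Set.range fun i : ℕ => X i - C (a i)) =
      MvPolynomial.vanishingIdeal k {a} := by
  apply le_antisymm
  · rw [Ideal.span_le]
    rintro _ ⟨i, rfl⟩
    intro x hx
    rcases hx with rfl
    simp
  · intro p hp
    have h0 : eval a p = 0 := by
      simpa [MvPolynomial.coe_aeval_eq_eval] using (MvPolynomial.mem_vanishingIdeal_singleton_iff a p).1 hp
    have := aux_mk_eq_C a p
    rw [h0, map_zero, map_zero, Ideal.Quotient.eq_zero_iff_mem] at this
    exact this

lemma aux_span_isMaximal {k : Type*} [Field k] (a : ℕ → k) :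
    (Ideal.span (Set.range fun i : ℕ => X i - C (a i))).IsMaximal := by
  rw [aux_span_eq_vanishingIdeal]
  exact inferInstance

/-- For an uncountable algebraically closed field `k`, an ideal `M` of `k[z_1, z_2, ...]`
is maximal iff it is generated by `{z_i - a_i : i ∈ ℕ}` for some point `a ∈ k^ℕ`. -/
theorem maximal_iff_span_sub_const {k : Type*} [Field k] [IsAlgClosed k] [Uncountable k]
    (M : Ideal (MvPolynomial ℕ k)) :
    M.IsMaximal ↔ ∃ a : ℕ → k, M = Ideal.span (Set.range fun i : ℕ => X i - C (a i)) := by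
  constructor
  · intro hM
    let L := MvPolynomial ℕ k ⧸ M
    letI : Field L := Ideal.Quotient.field M
    -- rank bound
    have hrank : Module.rank k L ≤ Cardinal.aleph0 := by
      have hsurj : Function.Surjective
          (Ideal.Quotient.mkₐ k M : MvPolynomial ℕ k →ₗ[k] L) :=
        Ideal.Quotient.mk_surjective
      have h1 := LinearMap.rank_le_of_surjective _ hsurj
      have h2 : Module.rank k (MvPolynomial ℕ k) = Cardinal.aleph0 := by
        rw [MvPolynomial.rank_eq_lift, Cardinal.mk_finsupp_nat, Cardinal.mk_nat,
          max_self, Cardinal.lift_aleph0]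
      exact h2 ▸ h1
    have halg : Algebra.IsAlgebraic k L := by
      constructor
      intro x
      by_contra hx
      have hli := (Transcendental.linearIndependent_sub_inv (F := k) (E := L) hx)
      have hk : (Cardinal.mk k) ≤ Cardinal.aleph0 := by
        have := hli.cardinal_lift_le_rank
        rw [Cardinal.lift_id, Cardinal.lift_id] at this
        exact this.trans hrank
      exact (Cardinal.aleph0_lt_mk (α := k)).not_ge hk
    haveI : Algebra.IsIntegral k L := Algebra.IsAlgebraic.isIntegral
    have hsurj := (IsAlgClosed.algebraMap_bijective_of_isIntegral (k := k) (K := L)).2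
    choose a ha using fun i => hsurj (Ideal.Quotient.mk M (X i))
    refine ⟨a, ?_⟩
    have hle : Ideal.span (Set.range fun i : ℕ => X i - C (a i)) ≤ M := by
      rw [Ideal.span_le]
      rintro _ ⟨i, rfl⟩
      have : Ideal.Quotient.mk M (X i - C (a i)) = 0 := by
        rw [map_sub, ← ha i]
        have : (Ideal.Quotient.mk M) (C (a i)) = algebraMap k L (a i) := rfl
        rw [this, sub_self]
      exact (Ideal.Quotient.eq_zero_iff_mem).1 this
    exact ((aux_span_isMaximal a).eq_of_le hM.ne_top hle).symm
  · rintro ⟨a, rfl⟩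
    exact aux_span_isMaximal a
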